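/- Let G be a group with a conjugation-invariant norm ν, let ω be a non-principal ultrafilter on ℕ, and let f : G → ℝ satisfy |f(g)| ≤ C·ν(g) for all g ∈ G and be a partial quasimorphism relative to ν with defect D ≥ 0. Let (g_n), (h_n) be sequences in G with ν(g_n) ≤ K·n and ν(h_n) ≤ K·n for all n ≥ 1 (some K > 0). Then the ultralimits A = lim_ω f(g_n)/n, B = lim_ω f(g_n h_n)/n, E = lim_ω f(h_n)/n, a = lim_ω ν(g_n)/n and b = lim_ω ν(h_n)/n all exist, and |A − B + E| ≤ D·min{a, b}. (This says that the induced function on the asymptotic cone of (G, ν) is a partial quasimorphism relative to the cone norm.) -/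

import Mathlib

open Filter Topology

/-- Every ultrafilter-limit of a bounded real sequence exists. -/
lemma exists_ultralimit_of_bounded (ω : Ultrafilter ℕ) (u : ℕ → ℝ) (M : ℝ)
    (hu : ∀ n, |u n| ≤ M) : ∃ x : ℝ, Tendsto u (↑ω : Filter ℕ) (𝓝 x) := by
  have hmem : ∀ n, u n ∈ Set.Icc (-M) M := fun n => abs_le.mp (hu n)
  have hle : (↑(ω.map u) : Filter ℝ) ≤ Filter.principal (Set.Icc (-M) M) := by
    rw [Ultrafilter.coe_map, Filter.le_principal_iff, Filter.mem_map]
    exact Filter.univ_mem' (fun n => hmem n)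
  obtain ⟨x, -, hx⟩ := (isCompact_Icc (a := -M) (b := M)).ultrafilter_le_nhds (ω.map u) hle
  exact ⟨x, by rwa [Ultrafilter.coe_map] at hx⟩

/-- Let `ν` be a conjugation-invariant norm on `G`, `f` a partial quasimorphism relative
to `ν` with defect `D ≥ 0` and `|f(g)| ≤ C·ν(g)`, and `ω` a non-principal ultrafilter.
For sequences `(gₙ)`, `(hₙ)` with `ν(gₙ), ν(hₙ) ≤ K·n` the ultralimits
`A = lim_ω f(gₙ)/n`, `B = lim_ω f(gₙhₙ)/n`, `E = lim_ω f(hₙ)/n`, `a = lim_ω ν(gₙ)/n`,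
`b = lim_ω ν(hₙ)/n` exist and `|A − B + E| ≤ D·min{a, b}`: the induced function on the
asymptotic cone is a partial quasimorphism. -/
theorem cone_function_partialQuasimorphism {G : Type*} [Group G] (ν : G → ℝ)
    (hν_nonneg : ∀ g : G, 0 ≤ ν g)
    (hν_zero : ∀ g : G, ν g = 0 ↔ g = 1)
    (hν_inv : ∀ g : G, ν g⁻¹ = ν g)
    (hν_mul : ∀ g h : G, ν (g * h) ≤ ν g + ν h)
    (hν_conj : ∀ g h : G, ν (h⁻¹ * g * h) = ν g)
    (ω : Ultrafilter ℕ) (hω : (↑ω : Filter ℕ) ≤ Filter.cofinite)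
    (f : G → ℝ) (C D : ℝ)
    (hf : ∀ g : G, |f g| ≤ C * ν g) (hD : 0 ≤ D)
    (hpqm : ∀ g h : G, |f g - f (g * h) + f h| ≤ D * min (ν g) (ν h))
    (g h : ℕ → G) (K : ℝ) (hK : 0 < K)
    (hg : ∀ n : ℕ, 1 ≤ n → ν (g n) ≤ K * n)
    (hh : ∀ n : ℕ, 1 ≤ n → ν (h n) ≤ K * n) :
    ∃ A B E a b : ℝ,
      Tendsto (fun n : ℕ => f (g n) / n) (↑ω : Filter ℕ) (𝓝 A) ∧
      Tendsto (fun n : ℕ => f (g n * h n) / n) (↑ω : Filter ℕ) (𝓝 B) ∧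
      Tendsto (fun n : ℕ => f (h n) / n) (↑ω : Filter ℕ) (𝓝 E) ∧
      Tendsto (fun n : ℕ => ν (g n) / n) (↑ω : Filter ℕ) (𝓝 a) ∧
      Tendsto (fun n : ℕ => ν (h n) / n) (↑ω : Filter ℕ) (𝓝 b) ∧
      |A - B + E| ≤ D * min a b := by
  have hC : 0 ≤ |C| := abs_nonneg C
  -- generic bounds
  have hbound : ∀ (k : ℕ → G) (L : ℝ), 0 ≤ L → (∀ n : ℕ, 1 ≤ n → ν (k n) ≤ L * n) →
      ∀ n : ℕ, |f (k n) / n| ≤ |C| * L := by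
    intro k L hL hk n
    rcases Nat.eq_zero_or_pos n with rfl | hn
    · simpa using mul_nonneg hC hL
    · have hn0 : (0 : ℝ) < n := by exact_mod_cast hn
      rw [abs_div, abs_of_pos hn0, div_le_iff₀ hn0]
      calc |f (k n)| ≤ C * ν (k n) := hf _
        _ ≤ |C| * ν (k n) := by
            exact mul_le_mul_of_nonneg_right (le_abs_self C) (hν_nonneg _)
        _ ≤ |C| * (L * n) := mul_le_mul_of_nonneg_left (hk n hn) hC
        _ = |C| * L * n := by ring
  have hboundν : ∀ (k : ℕ → G) (L : ℝ), 0 ≤ L → (∀ n : ℕ, 1 ≤ n → ν (k n) ≤ L * n) →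
      ∀ n : ℕ, |ν (k n) / n| ≤ L := by
    intro k L hL hk n
    rcases Nat.eq_zero_or_pos n with rfl | hn
    · simpa using hL
    · have hn0 : (0 : ℝ) < n := by exact_mod_cast hn
      rw [abs_div, abs_of_pos hn0, div_le_iff₀ hn0, abs_of_nonneg (hν_nonneg _)]
      exact hk n hn
  have hgh : ∀ n : ℕ, 1 ≤ n → ν (g n * h n) ≤ (K + K) * n := by
    intro n hn
    calc ν (g n * h n) ≤ ν (g n) + ν (h n) := hν_mul _ _
      _ ≤ K * n + K * n := add_le_add (hg n hn) (hh n hn)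
      _ = (K + K) * n := by ring
  obtain ⟨A, hA⟩ := exists_ultralimit_of_bounded ω _ _ (hbound g K hK.le hg)
  obtain ⟨B, hB⟩ := exists_ultralimit_of_bounded ω _ _
    (hbound (fun n => g n * h n) (K + K) (by linarith) hgh)
  obtain ⟨E, hE⟩ := exists_ultralimit_of_bounded ω _ _ (hbound h K hK.le hh)
  obtain ⟨a, ha⟩ := exists_ultralimit_of_bounded ω _ _ (hboundν g K hK.le hg)
  obtain ⟨b, hb⟩ := exists_ultralimit_of_bounded ω _ _ (hboundν h K hK.le hh)
  refine ⟨A, B, E, a, b, hA, hB, hE, ha, hb, ?_⟩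
  have hT1 : Tendsto (fun n : ℕ => |f (g n) / n - f (g n * h n) / n + f (h n) / n|)
      (↑ω : Filter ℕ) (𝓝 |A - B + E|) := ((hA.sub hB).add hE).abs
  have hT2 : Tendsto (fun n : ℕ => D * min (ν (g n) / n) (ν (h n) / n))
      (↑ω : Filter ℕ) (𝓝 (D * min a b)) := (ha.min hb).const_mul D
  refine le_of_tendsto_of_tendsto hT1 hT2 ?_
  have hev : ∀ᶠ n : ℕ in (↑ω : Filter ℕ), 1 ≤ n :=
    hω (Nat.cofinite_eq_atTop ▸ Filter.eventually_ge_atTop 1)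
  filter_upwards [hev] with n hn
  have hn0 : (0 : ℝ) < n := by exact_mod_cast hn
  have key := hpqm (g n) (h n)
  have : |f (g n) / n - f (g n * h n) / n + f (h n) / n|
      = |f (g n) - f (g n * h n) + f (h n)| / n := by
    rw [div_sub_div_same, ← add_div, abs_div, abs_of_pos hn0]
  rw [this]
  have : D * min (ν (g n) / n) (ν (h n) / n) = D * min (ν (g n)) (ν (h n)) / n := by
    rw [min_div_div_right hn0.le]; ring
  rw [this]
  exact div_le_div_of_nonneg_right key hn0.le
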